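/- Let n ≥ 3 and let p : Fin n → EuclideanSpace ℝ (Fin 2) be an injective family of n points in the Euclidean plane. Then there exist pairwise distinct indices i, j, k such that the angle ∠(p i, p j, p k) at p j is at most π / n. -/

import Mathlib

open Real EuclideanGeometry

/-- Pigeonhole: in a finite set of reals of cardinality ≥ 2, some two elements
are within `c` of each other, where `(card - 1) * c` bounds the spread. -/
lemma exists_pair_sub_le (s : Finset ℝ) (hs : 2 ≤ s.card) (c : ℝ)
    (h : s.Nonempty)
    (hc : s.max' h - s.min' h ≤ ((s.card : ℝ) - 1) * c) :
    ∃ a ∈ s, ∃ b ∈ s, a < b ∧ b - a ≤ c := by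
  by_contra hcon
  push_neg at hcon
  set m := s.card with hm
  let e := s.orderIsoOfFin hm.symm
  have key : ∀ k : ℕ, ∀ hk : k < m, 1 ≤ k → s.min' h + k * c < (e ⟨k, hk⟩ : ℝ) := by
    intro k
    induction k with
    | zero => intro _ h1; omega
    | succ k ih =>
      intro hk _
      have hk' : k < m := Nat.lt_of_succ_lt hk
      have hlt : (e ⟨k, hk'⟩ : ℝ) < (e ⟨k + 1, hk⟩ : ℝ) := by
        have : e ⟨k, hk'⟩ < e ⟨k + 1, hk⟩ := e.strictMono (by simp [Fin.lt_def])
        exact_mod_cast this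
      have hgap := hcon _ (e ⟨k, hk'⟩).2 _ (e ⟨k + 1, hk⟩).2 hlt
      rcases Nat.eq_zero_or_pos k with rfl | hk1
      · have h0 : s.min' h ≤ (e ⟨0, hk'⟩ : ℝ) := s.min'_le _ (e ⟨0, hk'⟩).2
        push_cast
        linarith
      · have := ih hk' hk1
        push_cast at this ⊢
        linarith
  have hm2 : m - 1 < m := by omega
  have hlast := key (m - 1) hm2 (by omega)
  have h1 : (e ⟨m - 1, hm2⟩ : ℝ) ≤ s.max' h := s.le_max' _ (e ⟨m - 1, hm2⟩).2
  have hcast : ((m - 1 : ℕ) : ℝ) = (m : ℝ) - 1 := by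
    have : 1 ≤ m := by omega
    push_cast [this]
    ring
  rw [hcast] at hlast
  linarith

/-- The unoriented angle between two nonzero complex numbers whose argument
difference lies in `(-π, π]` equals the absolute value of that difference. -/
lemma angle_complex {w z : ℂ} (hw : w ≠ 0) (hz : z ≠ 0)
    (h1 : -π < Complex.arg z - Complex.arg w) (h2 : Complex.arg z - Complex.arg w ≤ π) :
    InnerProductGeometry.angle w z = |Complex.arg z - Complex.arg w| := by
  haveI := Complex.finrank_real_complex_fact
  rw [Complex.orientation.angle_eq_abs_oangle_toReal hw hz]
  have h3 : Complex.orientation.oangle w z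
      = ((Complex.arg z - Complex.arg w : ℝ) : Real.Angle) := by
    rw [Complex.oangle,
      Complex.arg_mul_coe_angle (by simpa using hw : (starRingEnd ℂ) w ≠ 0) hz,
      Complex.arg_conj_coe_angle, Real.Angle.coe_sub]
    abel
  rw [h3, Real.Angle.toReal_coe_eq_self_iff.2 ⟨h1, h2⟩]

theorem exists_small_angle_plane (n : ℕ) (hn : 3 ≤ n)
    (p : Fin n → EuclideanSpace ℝ (Fin 2)) (hp : Function.Injective p) :
    ∃ i j k : Fin n, i ≠ j ∧ j ≠ k ∧ i ≠ k ∧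
      ∠ (p i) (p j) (p k) ≤ π / n := by
  have hπ : 0 < π := Real.pi_pos
  have hn0 : (3 : ℝ) ≤ (n : ℝ) := by exact_mod_cast hn
  have hπn : 0 < π / n := by positivity
  -- choose the lexicographically minimal point
  obtain ⟨j₀, -, hj₀⟩ := Finset.exists_min_image (Finset.univ : Finset (Fin n))
      (fun i => toLex (p i 0, p i 1)) ⟨⟨0, by omega⟩, Finset.mem_univ _⟩
  set F := Complex.orthonormalBasisOneI.repr.symm with hF
  set c : EuclideanSpace ℝ (Fin 2) → ℂ := fun x => F x with hc
  set φ : Fin n → ℝ := fun i => Complex.arg (c (p i) - c (p j₀)) with hφ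
  have hre : ∀ x : EuclideanSpace ℝ (Fin 2), (c x).re = x 0 := by
    intro x; simp [hc, hF]
  have him : ∀ x : EuclideanSpace ℝ (Fin 2), (c x).im = x 1 := by
    intro x; simp [hc, hF]
  have hlex : ∀ i, i ≠ j₀ → p j₀ 0 < p i 0 ∨ (p j₀ 0 = p i 0 ∧ p j₀ 1 < p i 1) := by
    intro i hi
    have h1 := hj₀ i (Finset.mem_univ i)
    have h2 : p i ≠ p j₀ := fun h => hi (hp h)
    have h3 : toLex (p j₀ 0, p j₀ 1) ≠ toLex (p i 0, p i 1) := by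
      intro h
      apply h2
      have h4 : (p j₀ 0, p j₀ 1) = (p i 0, p i 1) := h
      ext x
      fin_cases x
      · exact (congrArg Prod.fst h4).symm
      · exact (congrArg Prod.snd h4).symm
    exact Prod.Lex.lt_iff.1 (lt_of_le_of_ne h1 h3)
  have hv : ∀ i, i ≠ j₀ → (c (p i) - c (p j₀)) ≠ 0 ∧ -(π/2) < φ i ∧ φ i ≤ π/2 := by
    intro i hi
    rcases hlex i hi with h | ⟨h0, h1⟩
    · have hre' : 0 < (c (p i) - c (p j₀)).re := by
        rw [Complex.sub_re, hre, hre]; linarith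
      have hne : (c (p i) - c (p j₀)) ≠ 0 := by
        intro h'; rw [h'] at hre'; simp at hre'
      have habs := Complex.abs_arg_lt_pi_div_two_iff.2 (Or.inl hre')
      rw [abs_lt] at habs
      exact ⟨hne, habs.1, le_of_lt habs.2⟩
    · have him' : 0 < (c (p i) - c (p j₀)).im := by
        rw [Complex.sub_im, him, him]; linarith
      have hre' : (c (p i) - c (p j₀)).re = 0 := by
        rw [Complex.sub_re, hre, hre]; linarith
      have hne : (c (p i) - c (p j₀)) ≠ 0 := by
        intro h'; rw [h'] at him'; simp at him'
      have harg : φ i = π / 2 := Complex.arg_eq_pi_div_two_iff.2 ⟨hre', him'⟩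
      rw [harg]
      exact ⟨hne, by linarith, le_refl _⟩
  have hmap : ∀ a b : EuclideanSpace ℝ (Fin 2),
      c a - c b = F.toLinearIsometry (a -ᵥ b) := by
    intro a b
    simp [hc, vsub_eq_sub, map_sub]
  have hangle : ∀ i k, i ≠ j₀ → k ≠ j₀ → ∠ (p i) (p j₀) (p k) = |φ k - φ i| := by
    intro i k hi hk
    obtain ⟨hne_i, hlo_i, hhi_i⟩ := hv i hi
    obtain ⟨hne_k, hlo_k, hhi_k⟩ := hv k hk
    have h1 : ∠ (p i) (p j₀) (p k)
        = InnerProductGeometry.angle (c (p i) - c (p j₀)) (c (p k) - c (p j₀)) := by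
      rw [hmap, hmap, LinearIsometry.angle_map]
      rfl
    rw [h1, angle_complex hne_i hne_k (by linarith) (by linarith)]
  -- the set of indices other than j₀
  set t : Finset (Fin n) := Finset.univ.erase j₀ with ht
  have htcard : t.card = n - 1 := by
    rw [ht, Finset.card_erase_of_mem (Finset.mem_univ _), Finset.card_univ, Fintype.card_fin]
  by_cases hinj : ∀ i ∈ t, ∀ k ∈ t, φ i = φ k → i = k
  · -- φ injective on t
    set s : Finset ℝ := t.image φ with hs
    have hcard : s.card = n - 1 := by
      rw [hs, Finset.card_image_of_injOn (fun a ha b hb => hinj a ha b hb), htcard]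
    have hs2 : 2 ≤ s.card := by omega
    have hne : s.Nonempty := Finset.card_pos.1 (by omega)
    obtain ⟨kmax, hkmaxt, hkmax⟩ := Finset.mem_image.1 (s.max'_mem hne)
    obtain ⟨kmin, hkmint, hkmin⟩ := Finset.mem_image.1 (s.min'_mem hne)
    have hkmaxj : kmax ≠ j₀ := Finset.ne_of_mem_erase hkmaxt
    have hkminj : kmin ≠ j₀ := Finset.ne_of_mem_erase hkmint
    have hMnMx : s.min' hne ≤ s.max' hne := s.min'_le _ (s.max'_mem hne)
    by_cases hW : s.max' hne - s.min' hne ≤ π - 2 * π / n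
    · -- pigeonhole among the rays from p j₀
      have hcast : ((s.card : ℝ) - 1) = (n : ℝ) - 2 := by
        rw [hcard]
        have : 1 ≤ n := by omega
        push_cast [this]
        ring
      have hc' : s.max' hne - s.min' hne ≤ ((s.card : ℝ) - 1) * (π / n) := by
        rw [hcast]
        have hn' : (n : ℝ) ≠ 0 := by positivity
        have : ((n : ℝ) - 2) * (π / n) = π - 2 * π / n := by
          field_simp
        rw [this]
        exact hW
      obtain ⟨a, ha, b, hb, hab, hba⟩ := exists_pair_sub_le s hs2 (π / n) hne hc'
      obtain ⟨i, hit, rfl⟩ := Finset.mem_image.1 ha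
      obtain ⟨k, hkt, rfl⟩ := Finset.mem_image.1 hb
      refine ⟨i, j₀, k, Finset.ne_of_mem_erase hit, (Finset.ne_of_mem_erase hkt).symm,
        ?_, ?_⟩
      · intro h; rw [h] at hab; exact lt_irrefl _ hab
      · rw [hangle i k (Finset.ne_of_mem_erase hit) (Finset.ne_of_mem_erase hkt),
          abs_of_nonneg (by linarith)]
        linarith
    · -- wide span: use the triangle through the extreme rays
      push_neg at hW
      have hMx : π - 2 * π / n < s.max' hne - s.min' hne := hW
      have hgap : 0 < s.max' hne - s.min' hne := by
        have : 2 * π / n ≤ 2 * π / 3 := by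
          apply div_le_div_of_nonneg_left (by linarith) (by norm_num) hn0
        linarith
      have hkk : kmax ≠ kmin := by
        intro h
        rw [h, hkmin] at hkmax
        linarith
      have hWangle : ∠ (p kmax) (p j₀) (p kmin) = s.max' hne - s.min' hne := by
        rw [hangle kmax kmin hkmaxj hkminj, hkmax, hkmin, abs_sub_comm,
          abs_of_nonneg (by linarith)]
      have hsum := EuclideanGeometry.angle_add_angle_add_angle_eq_pi
        (p₁ := p j₀) (p₂ := p kmax) (p₃ := p kmin)
        (hp.ne hkmaxj)
      rw [EuclideanGeometry.angle_comm (p kmin) (p j₀) (p kmax), hWangle] at hsum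
      have hnn1 := EuclideanGeometry.angle_nonneg (p j₀) (p kmax) (p kmin)
      have hnn2 := EuclideanGeometry.angle_nonneg (p kmax) (p kmin) (p j₀)
      rcases le_or_gt (∠ (p j₀) (p kmax) (p kmin)) (π / n) with hle | hlt
      · exact ⟨j₀, kmax, kmin, hkmaxj.symm, hkk, hkminj.symm, hle⟩
      · refine ⟨kmax, kmin, j₀, hkk, hkminj, hkmaxj, ?_⟩
        have h2 : 2 * π / n = 2 * (π / n) := by ring
        linarith
  · -- two other points give the same direction from p j₀: angle 0
    push_neg at hinj
    obtain ⟨i, hit, k, hkt, heq, hik⟩ := hinj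
    refine ⟨i, j₀, k, Finset.ne_of_mem_erase hit, (Finset.ne_of_mem_erase hkt).symm, hik, ?_⟩
    rw [hangle i k (Finset.ne_of_mem_erase hit) (Finset.ne_of_mem_erase hkt), heq]
    simpa using le_of_lt hπn
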